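/- The generating function C_{β,γ}(x) = ∑_{n≥0} (γ/(βn+γ)) * C(βn+γ, n) * x^n of the generalized Catalan numbers, viewed as a formal power series over ℚ, satisfies C_{β,γ}(x(1-x)^{β-1}) = (1-x)^{-γ} for positive integers β, γ; i.e., the composition of the formal power series C_{β,γ} with x(1-x)^{β-1} equals the formal power series (1-x)^{-γ}. -/

import Mathlib

open PowerSeries Finset


open Finset

/-- Binomial polynomial `t.choose m` as a function `ℚ → ℚ`. -/
noncomputable def Bq (m : ℕ) (t : ℚ) : ℚ :=
  (∏ i ∈ Finset.range m, (t - i)) / m.factorial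

lemma Bq_zero (t : ℚ) : Bq 0 t = 1 := by simp [Bq]

lemma Bq_pascal (m : ℕ) (t : ℚ) : Bq (m+1) t = Bq (m+1) (t-1) + Bq m (t-1) := by
  have hm : ((m.factorial : ℚ)) ≠ 0 := by exact_mod_cast m.factorial_ne_zero
  unfold Bq
  rw [Finset.prod_range_succ' (fun i => t - (i:ℚ)), Finset.prod_range_succ]
  have h1 : (∏ i ∈ range m, (t - ((i+1 : ℕ):ℚ))) = ∏ i ∈ range m, (t - 1 - (i:ℚ)) := by
    apply Finset.prod_congr rfl; intro i _; push_cast; ring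
  rw [h1, Nat.factorial_succ]
  push_cast
  field_simp
  ring

lemma Bq_nat (N m : ℕ) : Bq m (N : ℚ) = (N.choose m : ℚ) := by
  have hm : ((m.factorial : ℚ)) ≠ 0 := by exact_mod_cast m.factorial_ne_zero
  unfold Bq
  by_cases h : m ≤ N
  · have hp : (∏ i ∈ range m, ((N:ℚ) - i)) = ((N.descFactorial m : ℕ) : ℚ) := by
      rw [Nat.descFactorial_eq_prod_range, Nat.cast_prod]
      apply Finset.prod_congr rfl
      intro i hi
      have : i ≤ N := le_trans (Nat.le_of_lt (Finset.mem_range.mp hi)) h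
      rw [Nat.cast_sub this]
    rw [hp, Nat.descFactorial_eq_factorial_mul_choose]
    push_cast
    field_simp
  · push_neg at h
    have hz : (∏ i ∈ range m, ((N:ℚ) - i)) = 0 :=
      Finset.prod_eq_zero (Finset.mem_range.mpr h) (by simp)
    rw [hz, Nat.choose_eq_zero_of_lt h]
    simp


noncomputable def Aq (b : ℚ) : ℕ → ℚ → ℚ
  | 0, _ => 1
  | (k+1), x => x * (∏ i ∈ Finset.range k, (x + b*(k+1) - 1 - i)) / (k+1).factorial

lemma prod_shift_down (c : ℚ) (k : ℕ) :
    (∏ i ∈ Finset.range (k+1), (c - i)) = c * ∏ i ∈ Finset.range k, (c - 1 - i) := by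
  rw [Finset.prod_range_succ' (fun i => c - (i:ℚ))]
  rw [mul_comm]
  congr 1
  · push_cast; ring_nf
  apply Finset.prod_congr rfl; intro i _; push_cast; ring

lemma Aq_rec (b : ℚ) (k : ℕ) (x : ℚ) :
    Aq b (k+1) (x+1) = Aq b (k+1) x + Aq b k (x + b) := by
  cases k with
  | zero => simp [Aq]
  | succ k =>
    simp only [Aq]
    push_cast
    set c : ℚ := x + b*(k+2) - 1 with hc
    have e1 : (∏ i ∈ range (k+1), (x + 1 + b * ((k:ℚ) + 1 + 1) - 1 - i))
        = (c+1) * ∏ i ∈ range k, (c - i) := by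
      rw [show (∏ i ∈ range (k+1), (x + 1 + b * ((k:ℚ) + 1 + 1) - 1 - i))
          = ∏ i ∈ range (k+1), ((c+1) - i) from
        Finset.prod_congr rfl fun i _ => by rw [hc]; ring]
      rw [prod_shift_down]
      congr 1
      exact Finset.prod_congr rfl fun i _ => by ring
    have e2 : (∏ i ∈ range (k+1), (x + b * ((k:ℚ) + 1 + 1) - 1 - i))
        = (∏ i ∈ range k, (c - i)) * (c - k) := by
      rw [show (∏ i ∈ range (k+1), (x + b * ((k:ℚ) + 1 + 1) - 1 - i))
          = ∏ i ∈ range (k+1), (c - i) from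
        Finset.prod_congr rfl fun i _ => by rw [hc]; ring]
      exact Finset.prod_range_succ _ _
    have e3 : (∏ i ∈ range k, (x + b + b * ((k:ℚ) + 1) - 1 - i))
        = ∏ i ∈ range k, (c - i) := by
      exact Finset.prod_congr rfl fun i _ => by rw [hc]; ring
    rw [e1, e2, e3]
    have hf1 : (((k+1+1).factorial : ℚ)) = ((k:ℚ)+2) * (((k:ℚ)+1) * k.factorial) := by
      rw [Nat.factorial_succ, Nat.factorial_succ]; push_cast; ring
    have hf2 : (((k+1).factorial : ℚ)) = ((k:ℚ)+1) * k.factorial := by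
      rw [Nat.factorial_succ]; push_cast; ring
    rw [hf1, hf2]
    have hk : ((k.factorial : ℚ)) ≠ 0 := by exact_mod_cast k.factorial_ne_zero
    have hk1 : ((k:ℚ)+1) ≠ 0 := by positivity
    have hk2 : ((k:ℚ)+2) ≠ 0 := by positivity
    field_simp
    rw [hc]
    ring



noncomputable def Sq (b : ℚ) (n : ℕ) (x c : ℚ) : ℚ :=
  ∑ k ∈ Finset.range (n+1), (-1)^(n-k) * Aq b k x * Bq (n-k) ((b-1)*k + c)

lemma Sq_peel (b : ℚ) (n : ℕ) (y c : ℚ) :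
    Sq b (n+1) y c
      = (∑ k ∈ range (n+1), (-1)^(n-k) * Aq b (k+1) y * Bq (n-k) ((b-1)*((k:ℚ)+1) + c))
        + (-1)^(n+1) * Bq (n+1) c := by
  unfold Sq
  rw [Finset.sum_range_succ']
  congr 1
  · apply Finset.sum_congr rfl
    intro k _
    rw [Nat.succ_sub_succ]
    push_cast
    ring_nf
  · simp [Aq]

lemma Sq_step (b : ℚ) (n : ℕ) (x c : ℚ) :
    Sq b (n+1) (x+1) c = Sq b (n+1) x c + Sq b n (x+b) (c+b-1) := by
  rw [Sq_peel, Sq_peel]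
  have hcong : ∀ k ∈ range (n+1),
      (-1:ℚ)^(n-k) * Aq b (k+1) (x+1) * Bq (n-k) ((b-1)*((k:ℚ)+1) + c)
        = (-1)^(n-k) * Aq b (k+1) x * Bq (n-k) ((b-1)*((k:ℚ)+1) + c)
          + (-1)^(n-k) * Aq b k (x+b) * Bq (n-k) ((b-1)*(k:ℚ) + (c+b-1)) := by
    intro k _
    rw [Aq_rec, show (b-1)*((k:ℚ)+1) + c = (b-1)*(k:ℚ) + (c+b-1) from by ring]
    ring
  rw [Finset.sum_congr rfl hcong, Finset.sum_add_distrib]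
  unfold Sq
  ring


lemma Sq_eval (b : ℕ) : ∀ (n : ℕ) (x : ℕ) (c : ℚ),
    Sq (b:ℚ) n (x:ℚ) c = (-1)^n * Bq n (c - x) := by
  intro n
  induction n with
  | zero =>
    intro x c
    simp [Sq, Aq, Bq]
  | succ n ihn =>
    intro x
    induction x with
    | zero =>
      intro c
      unfold Sq
      rw [Finset.sum_eq_single 0]
      · simp [Aq]
      · intro k hk hk0
        obtain ⟨j, rfl⟩ := Nat.exists_eq_succ_of_ne_zero hk0
        simp [Aq]
      · intro h
        exact absurd (Finset.mem_range.mpr (Nat.succ_pos _)) h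
    | succ x ihx =>
      intro c
      have hx1 : ((x+1 : ℕ) : ℚ) = (x:ℚ) + 1 := by push_cast; ring
      rw [hx1, Sq_step, ihx c]
      have h2 := ihn (x+b) (c + (b:ℚ) - 1)
      rw [show (((x+b : ℕ)) : ℚ) = (x:ℚ) + (b:ℚ) from by push_cast; ring] at h2
      rw [show (c + (b:ℚ) - 1) - ((x:ℚ) + (b:ℚ)) = c - (x:ℚ) - 1 from by ring] at h2
      rw [h2]
      rw [show c - ((x:ℚ) + 1) = c - (x:ℚ) - 1 from by ring]
      have hp := Bq_pascal n (c - (x:ℚ))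
      rw [hp]
      ring

lemma Sq_diag (b : ℕ) (x : ℕ) (n : ℕ) (hn : 0 < n) :
    Sq (b:ℚ) n (x:ℚ) (x:ℚ) = 0 := by
  rw [Sq_eval, show (x:ℚ) - (x:ℚ) = ((0:ℕ):ℚ) from by push_cast; ring, Bq_nat,
    Nat.choose_eq_zero_of_lt hn]
  simp

lemma Aq_nat (β γ : ℕ) (hβ : 0 < β) (hγ : 0 < γ) (k : ℕ) :
    Aq (β:ℚ) k (γ:ℚ) = (γ:ℚ)/((β:ℚ)*k+(γ:ℚ)) * (((β*k+γ).choose k : ℕ) : ℚ) := by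
  cases k with
  | zero =>
    have : ((γ:ℚ)) ≠ 0 := by positivity
    simp [Aq]
    field_simp
  | succ k =>
    set m : ℕ := β*(k+1)+γ with hm
    have hm1 : 1 ≤ m := by omega
    have hmk : k ≤ m - 1 := by
      have : k + 1 ≤ β * (k+1) := Nat.le_mul_of_pos_left _ hβ
      omega
    -- the product equals the cast descending factorial of m-1
    have hp : (∏ i ∈ range k, ((γ:ℚ) + (β:ℚ)*((k:ℚ)+1) - 1 - i))
        = (((m-1).descFactorial k : ℕ) : ℚ) := by
      rw [Nat.descFactorial_eq_prod_range, Nat.cast_prod]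
      apply Finset.prod_congr rfl
      intro i hi
      have hi' : i ≤ m - 1 := le_trans (Nat.le_of_lt (Finset.mem_range.mp hi)) hmk
      rw [Nat.cast_sub hi', Nat.cast_sub hm1]
      push_cast [hm]
      ring
    have key : m * ((m-1).descFactorial k) = (k+1).factorial * (m.choose (k+1)) := by
      rw [← Nat.descFactorial_eq_factorial_mul_choose]
      conv_rhs => rw [show m = (m-1)+1 from (Nat.succ_pred_eq_of_pos hm1).symm]
      rw [Nat.succ_descFactorial_succ]
      congr 1
      omega
    have keyQ : ((m:ℚ)) * (((m-1).descFactorial k : ℕ) : ℚ)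
        = (((k+1).factorial : ℕ) : ℚ) * ((m.choose (k+1) : ℕ) : ℚ) := by
      exact_mod_cast congrArg (fun z : ℕ => (z:ℚ)) key
    have hmQ : ((β:ℚ)*((k:ℚ)+1)+(γ:ℚ)) = (m:ℚ) := by push_cast [hm]; ring
    have hmne : ((m:ℚ)) ≠ 0 := by
      have : 0 < m := hm1
      positivity
    have hfne : (((k+1).factorial : ℕ) : ℚ) ≠ 0 := by exact_mod_cast (k+1).factorial_ne_zero
    simp only [Aq]
    push_cast
    rw [hp, hmQ]
    field_simp
    linear_combination keyQ


lemma coeff_term_aux (m k j : ℕ) :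
    PowerSeries.coeff (R := ℚ) j ((-PowerSeries.X)^k * 1^(m-k) * ((m.choose k : ℕ) : ℚ⟦X⟧))
      = (if j = k then (-1)^j * (m.choose k : ℚ) else 0) := by
  rw [one_pow, mul_one, neg_pow, ← map_natCast (PowerSeries.C (R := ℚ)) (m.choose k),
    coeff_mul_C, mul_comm ((-1 : ℚ⟦X⟧)^k),
    show ((-1 : ℚ⟦X⟧)) = PowerSeries.C (R := ℚ) (-1) from by simp,
    ← map_pow, coeff_mul_C, coeff_X_pow]
  split_ifs with h
  · subst h; ring
  · ring

lemma coeff_one_sub_X_pow (m j : ℕ) :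
    PowerSeries.coeff (R := ℚ) j ((1 - PowerSeries.X)^m) = (-1)^j * (m.choose j : ℚ) := by
  rw [sub_eq_add_neg, add_comm, add_pow, map_sum]
  rw [Finset.sum_congr rfl (fun k _ => coeff_term_aux m k j)]
  simp_rw [eq_comm (a := j)]
  rw [Finset.sum_ite_eq' (Finset.range (m+1)) j (fun k => (-1:ℚ)^j * (m.choose k : ℚ))]
  split_ifs with h
  · rfl
  · rw [Nat.choose_eq_zero_of_lt (by simpa using h)]
    simp


/-- Composition of formal power series (well-defined as stated when the inner
series has zero constant coefficient, so that `coeff n (g ^ k) = 0` for `k > n`). -/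
noncomputable def PowerSeries.comp (f g : PowerSeries ℚ) : PowerSeries ℚ :=
  PowerSeries.mk fun n => ∑ k ∈ Finset.range (n + 1),
    (PowerSeries.coeff (R := ℚ) k f) * (PowerSeries.coeff (R := ℚ) n (g ^ k))

/-- The generating function of the generalized Catalan numbers. -/
noncomputable def genCatalanSeries (β γ : ℕ) : PowerSeries ℚ :=
  PowerSeries.mk fun n => ((γ : ℚ) / (β * n + γ)) * ((β * n + γ).choose n)

theorem stmt_4 (β γ : ℕ) (hβ : 0 < β) (hγ : 0 < γ) :
    PowerSeries.comp (genCatalanSeries β γ)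
        (PowerSeries.X * (1 - PowerSeries.X) ^ (β - 1))
      = ((1 - PowerSeries.X : PowerSeries ℚ)⁻¹) ^ γ := by
  set g : ℚ⟦X⟧ := X * (1 - X) ^ (β - 1) with hg
  have hg_low : ∀ (k j : ℕ), j < k → PowerSeries.coeff (R := ℚ) j (g^k) = 0 := by
    intro k j h
    rw [hg, mul_pow, coeff_X_pow_mul', if_neg (not_le.mpr h)]
  have hgH : ∀ k : ℕ, g^k * (1 - X)^γ = X^k * (1 - X)^((β-1)*k + γ) := by
    intro k
    rw [hg, mul_pow, mul_assoc, ← pow_mul, ← pow_add]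
  have hmain : PowerSeries.comp (genCatalanSeries β γ) g * (1 - X)^γ = 1 := by
    ext n
    rw [PowerSeries.coeff_mul]
    have hF : ∀ p ∈ Finset.HasAntidiagonal.antidiagonal n,
        PowerSeries.coeff (R := ℚ) p.1 (PowerSeries.comp (genCatalanSeries β γ) g)
          = ∑ k ∈ range (n+1),
              PowerSeries.coeff (R := ℚ) k (genCatalanSeries β γ) * PowerSeries.coeff (R := ℚ) p.1 (g^k) := by
      intro p hp
      rw [PowerSeries.comp, coeff_mk]
      apply Finset.sum_subset
      · apply Finset.range_subset_range.mpr
        have : p.1 ≤ n := by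
          have := Finset.HasAntidiagonal.mem_antidiagonal.mp hp
          omega
        omega
      · intro k _ hk
        have hpk : p.1 < k := by
          simp only [Finset.mem_range, not_lt] at hk
          omega
        rw [hg_low k p.1 hpk, mul_zero]
    rw [Finset.sum_congr rfl (fun p hp => by rw [hF p hp])]
    simp_rw [Finset.sum_mul]
    rw [Finset.sum_comm]
    have hinner : ∀ k ∈ range (n+1),
        (∑ p ∈ Finset.HasAntidiagonal.antidiagonal n,
          PowerSeries.coeff (R := ℚ) k (genCatalanSeries β γ) * PowerSeries.coeff (R := ℚ) p.1 (g^k)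
            * PowerSeries.coeff (R := ℚ) p.2 ((1 - X)^γ))
        = PowerSeries.coeff (R := ℚ) k (genCatalanSeries β γ)
            * PowerSeries.coeff (R := ℚ) n (g^k * (1 - X)^γ) := by
      intro k _
      rw [PowerSeries.coeff_mul, Finset.mul_sum]
      apply Finset.sum_congr rfl
      intro p _
      ring
    rw [Finset.sum_congr rfl hinner]
    have hterm : ∀ k ∈ range (n+1),
        PowerSeries.coeff (R := ℚ) k (genCatalanSeries β γ) * PowerSeries.coeff (R := ℚ) n (g^k * (1 - X)^γ)
          = (-1:ℚ)^(n-k) * Aq (β:ℚ) k (γ:ℚ) * Bq (n-k) (((β:ℚ)-1)*k + (γ:ℚ)) := by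
      intro k hk
      have hkn : k ≤ n := by
        have := Finset.mem_range.mp hk; omega
      rw [hgH k, coeff_X_pow_mul', if_pos hkn, coeff_one_sub_X_pow]
      rw [genCatalanSeries, coeff_mk, ← Aq_nat β γ hβ hγ k]
      have hcast : (((β-1)*k + γ : ℕ) : ℚ) = ((β:ℚ)-1)*(k:ℚ) + (γ:ℚ) := by
        push_cast [Nat.cast_sub (by omega : 1 ≤ β)]
        ring
      rw [← hcast, Bq_nat ((β-1)*k + γ) (n-k)]
      ring
    rw [Finset.sum_congr rfl hterm]
    have : (∑ k ∈ range (n+1), (-1:ℚ)^(n-k) * Aq (β:ℚ) k (γ:ℚ) * Bq (n-k) (((β:ℚ)-1)*k + (γ:ℚ)))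
        = Sq (β:ℚ) n (γ:ℚ) (γ:ℚ) := rfl
    rw [this, Sq_eval β n γ (γ:ℚ)]
    rw [show (γ:ℚ) - (γ:ℚ) = ((0:ℕ):ℚ) from by push_cast; ring, Bq_nat 0 n]
    rcases n with _ | n
    · simp
    · rw [Nat.choose_eq_zero_of_lt (Nat.succ_pos n)]
      simp [PowerSeries.coeff_one]
  have hconst : PowerSeries.constantCoeff (R := ℚ) (1 - X) ≠ 0 := by
    simp
  have hR : ((1 - X : ℚ⟦X⟧)⁻¹)^γ * (1 - X)^γ = 1 := by
    rw [← mul_pow, PowerSeries.inv_mul_cancel _ hconst, one_pow]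
  calc PowerSeries.comp (genCatalanSeries β γ) g
      = PowerSeries.comp (genCatalanSeries β γ) g * (((1 - X : ℚ⟦X⟧)⁻¹)^γ * (1 - X)^γ) := by
        rw [hR, mul_one]
    _ = (PowerSeries.comp (genCatalanSeries β γ) g * (1 - X)^γ) * ((1 - X : ℚ⟦X⟧)⁻¹)^γ := by
        ring
    _ = ((1 - X : ℚ⟦X⟧)⁻¹)^γ := by rw [hmain, one_mul]
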